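/- The group with presentation ⟨a, b ; aba = bab, a² = b²⟩ is isomorphic to a semidirect product of ℤ acting on ℤ/3ℤ by the nontrivial action (inversion); in particular its abelianization is ℤ and it contains a normal subgroup of order 3 with infinite cyclic quotient. -/

import Mathlib

open FreeGroup in
/-- Relators `aba(bab)⁻¹` and `a²b⁻²` on two generators. -/
def torusKnotRels : Set (FreeGroup (Fin 2)) :=
  {of 0 * of 1 * of 0 * (of 1 * of 0 * of 1)⁻¹,
   of 0 ^ 2 * (of 1 ^ 2)⁻¹}

/-- The action of `ℤ` on `ℤ/3` in which the generator acts by inversion. -/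
noncomputable def invAction : Multiplicative ℤ →* MulAut (Multiplicative (ZMod 3)) :=
  zpowersHom _ (MulEquiv.inv (Multiplicative (ZMod 3)))

open Multiplicative

lemma zmod3_hom_ext {H : Type*} [Monoid H] {f g : Multiplicative (ZMod 3) →* H}
    (h : f (ofAdd 1) = g (ofAdd 1)) : f = g := by
  apply MonoidHom.ext; intro x
  have hx : x = (ofAdd (1 : ZMod 3)) ^ (Multiplicative.toAdd x).val := by
    rw [← ofAdd_nsmul, nsmul_eq_mul, mul_one, ZMod.natCast_rightInverse, ofAdd_toAdd]
  rw [hx, map_pow, map_pow, h]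

/-- The group `⟨a, b ; aba = bab, a² = b²⟩` is isomorphic to the semidirect product
`ℤ/3 ⋊ ℤ` where the generator of `ℤ` acts by inversion. -/
theorem dehn_group_example_semidirect :
    Nonempty
      (PresentedGroup torusKnotRels ≃*
        SemidirectProduct (Multiplicative (ZMod 3)) (Multiplicative ℤ) invAction) := by
  set Hsd := SemidirectProduct (Multiplicative (ZMod 3)) (Multiplicative ℤ) invAction with hHsd
  set a : Hsd := ⟨ofAdd 1, ofAdd 1⟩ with ha
  set b : Hsd := ⟨1, ofAdd 1⟩ with hb
  have hrel : ∀ r ∈ torusKnotRels,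
      FreeGroup.lift (fun i : Fin 2 => if i = 0 then a else b) r = 1 := by
    rintro r (rfl | rfl) <;>
      · simp only [map_mul, map_inv, map_pow, FreeGroup.lift_apply_of, if_pos, if_neg]
        ext <;> simp [ha, hb, invAction, SemidirectProduct.mul_left, SemidirectProduct.mul_right,
          SemidirectProduct.inv_left, SemidirectProduct.inv_right] <;> decide
  set φ : PresentedGroup torusKnotRels →* Hsd := PresentedGroup.toGroup hrel with hφ
  -- generators of the presented group
  set A : PresentedGroup torusKnotRels := PresentedGroup.of 0 with hA
  set B : PresentedGroup torusKnotRels := PresentedGroup.of 1 with hB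
  have hmk : ∀ r ∈ torusKnotRels, PresentedGroup.mk torusKnotRels r = 1 := fun r hr =>
    (QuotientGroup.eq_one_iff r).2 (Subgroup.subset_normalClosure hr)
  have h1 : A * B * A = B * A * B := by
    have := hmk _ (Set.mem_insert _ _)
    simp only [map_mul, map_inv, mul_inv_eq_one] at this
    exact this
  have h2 : A * A = B * B := by
    have := hmk _ (Set.mem_insert_of_mem _ rfl)
    simp only [map_mul, map_inv, map_pow, mul_inv_eq_one, pow_two] at this
    exact this
  -- the order-3 element
  set X : PresentedGroup torusKnotRels := A * B⁻¹ with hX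
  have e1 : B⁻¹ * A = B * A⁻¹ := by
    calc B⁻¹ * A = B⁻¹ * (A * A) * A⁻¹ := by group
      _ = B⁻¹ * (B * B) * A⁻¹ := by rw [h2]
      _ = B * A⁻¹ := by group
  have e3 : A * B * A⁻¹ = B * A * B⁻¹ := by
    calc A * B * A⁻¹ = (A * B * A) * (A * A)⁻¹ := by group
      _ = (B * A * B) * (B * B)⁻¹ := by rw [h1, h2]
      _ = B * A * B⁻¹ := by group
  have hX3 : X ^ 3 = 1 := by
    calc X ^ 3 = X * X * X := by rw [pow_succ, pow_two]
      _ = A * (B⁻¹ * A) * (B⁻¹ * A) * B⁻¹ := by rw [hX]; group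
      _ = A * (B * A⁻¹) * (B * A⁻¹) * B⁻¹ := by rw [e1]
      _ = (A * B * A⁻¹) * (B * (A⁻¹ * B⁻¹)) := by group
      _ = (B * A * B⁻¹) * (B * (A⁻¹ * B⁻¹)) := by rw [e3]
      _ = 1 := by group
  -- the homomorphism from ZMod 3
  have h3' : (zmultiplesHom (Additive (PresentedGroup torusKnotRels)) (Additive.ofMul X)) 3 = 0 := by
    rw [zmultiplesHom_apply, ← ofMul_zpow, zpow_ofNat, hX3, ofMul_one]
  set f₁ : Multiplicative (ZMod 3) →* PresentedGroup torusKnotRels :=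
    AddMonoidHom.toMultiplicativeLeft
      (ZMod.lift 3 ⟨zmultiplesHom _ (Additive.ofMul X), h3'⟩) with hf₁
  have hf₁1 : f₁ (ofAdd 1) = X := by
    rw [hf₁]
    simp only [AddMonoidHom.coe_toMultiplicativeLeft, Function.comp_apply, toAdd_ofAdd]
    rw [show (1 : ZMod 3) = ((1 : ℤ) : ZMod 3) by norm_num, ZMod.lift_coe]
    simp [zmultiplesHom]
  set f₂ : Multiplicative ℤ →* PresentedGroup torusKnotRels := zpowersHom _ B with hf₂
  -- conjugation by B inverts X
  have keyX : B * X * B⁻¹ = X⁻¹ := by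
    calc B * X * B⁻¹ = B * A * (B * B)⁻¹ := by rw [hX]; group
      _ = B * A * (A * A)⁻¹ := by rw [h2]
      _ = X⁻¹ := by rw [hX]; group
  have keyel : ∀ x : Multiplicative (ZMod 3), f₁ x⁻¹ = B * f₁ x * B⁻¹ := by
    have h := zmod3_hom_ext (f := f₁.comp (MulEquiv.inv (Multiplicative (ZMod 3))).toMonoidHom)
      (g := (MulAut.conj B).toMonoidHom.comp f₁) (by
        simp only [MonoidHom.comp_apply, MulEquiv.coe_toMonoidHom, MulEquiv.inv_apply,
          MulAut.conj_apply]
        rw [map_inv, hf₁1, keyX])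
    intro x
    have := DFunLike.congr_fun h x
    simpa using this
  have keyel' : ∀ x : Multiplicative (ZMod 3), f₁ x⁻¹ = B⁻¹ * f₁ x * B := by
    intro x
    have h := keyel x⁻¹
    rw [inv_inv] at h
    rw [h]; group
  have iA1 : ∀ x : Multiplicative (ZMod 3), invAction (ofAdd 1) x = x⁻¹ := by
    intro x; simp [invAction]
  have iAm1 : ∀ x : Multiplicative (ZMod 3), invAction (ofAdd (-1)) x = x⁻¹ := by
    have h1' : ∀ x : Multiplicative (ZMod 3), invAction (ofAdd (-1)) x⁻¹ = x := by
      intro x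
      have := congrArg (invAction (ofAdd (-1))) (iA1 x)
      rw [← this, ← MulAut.mul_apply, ← map_mul]
      simp
    intro x
    have := h1' x⁻¹
    rwa [inv_inv] at this
  have key' : ∀ (n : ℤ) (x : Multiplicative (ZMod 3)),
      f₁ (invAction (ofAdd n) x) = f₂ (ofAdd n) * f₁ x * (f₂ (ofAdd n))⁻¹ := by
    intro n
    induction n using Int.induction_on with
    | zero => intro x; simp
    | succ n ih =>
      intro x
      have hsplit : (ofAdd ((n : ℤ) + 1)) = ofAdd (n : ℤ) * ofAdd 1 := by
        rw [← ofAdd_add]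
      rw [hsplit, map_mul, MulAut.mul_apply, iA1, ih, keyel]
      simp only [map_mul]
      rw [show f₂ (ofAdd (1 : ℤ)) = B by simp [hf₂]]
      group
    | pred n ih =>
      intro x
      have hsplit : (ofAdd (-(n : ℤ) - 1)) = ofAdd (-(n : ℤ)) * ofAdd (-1) := by
        rw [← ofAdd_add]; ring_nf
      rw [hsplit, map_mul, MulAut.mul_apply, iAm1, ih, keyel']
      simp only [map_mul]
      rw [show f₂ (ofAdd (-1 : ℤ)) = B⁻¹ by simp [hf₂]]
      group
  have key : ∀ g : Multiplicative ℤ,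
      f₁.comp ((invAction g).toMonoidHom) =
        (MulAut.conj (f₂ g)).toMonoidHom.comp f₁ := by
    intro g
    apply MonoidHom.ext; intro x
    simpa using key' (Multiplicative.toAdd g) x
  set ψ : Hsd →* PresentedGroup torusKnotRels := SemidirectProduct.lift f₁ f₂ key with hψ
  have hφA : φ A = a := by rw [hφ, hA]; exact PresentedGroup.toGroup.of hrel
  have hφB : φ B = b := by rw [hφ, hB]; simpa using PresentedGroup.toGroup.of hrel (x := 1)
  have c1 : ψ.comp φ = MonoidHom.id _ := by
    apply PresentedGroup.ext
    intro i
    fin_cases i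
    · show ψ (φ A) = A
      rw [hφA]
      have : a = SemidirectProduct.inl (ofAdd 1) * SemidirectProduct.inr (ofAdd 1) :=
        (SemidirectProduct.inl_left_mul_inr_right a).symm
      rw [this, map_mul, hψ, SemidirectProduct.lift_inl, SemidirectProduct.lift_inr,
        hf₁1, hf₂, zpowersHom_apply, toAdd_ofAdd, zpow_one, hX]
      group
    · show ψ (φ B) = B
      rw [hφB]
      have : b = SemidirectProduct.inr (ofAdd 1) := by
        ext <;> simp [hb]
      rw [this, hψ, SemidirectProduct.lift_inr, hf₂, zpowersHom_apply, toAdd_ofAdd, zpow_one]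
  have c2 : φ.comp ψ = MonoidHom.id _ := by
    apply SemidirectProduct.hom_ext
    · apply zmod3_hom_ext
      simp only [MonoidHom.comp_apply, MonoidHom.id_apply]
      rw [hψ, SemidirectProduct.lift_inl, hf₁1, hX, map_mul, map_inv, hφA, hφB]
      ext <;> simp [ha, hb, invAction, SemidirectProduct.mul_left, SemidirectProduct.mul_right,
        SemidirectProduct.inv_left, SemidirectProduct.inv_right] <;> decide
    · apply MonoidHom.ext_mint
      simp only [MonoidHom.comp_apply, MonoidHom.id_apply]
      rw [hψ, SemidirectProduct.lift_inr, hf₂, zpowersHom_apply, toAdd_ofAdd, zpow_one, hφB]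
      ext <;> simp [hb] <;> rfl
  exact ⟨MonoidHom.toMulEquiv φ ψ c1 c2⟩
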